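/- Let A be a commutative associative algebra over ℂ with a symmetric associative bilinear form ⟨·,·⟩, and let L(A) = (A ⊗ ℂ[t,t⁻¹]) ⊕ ℂK be the Lie algebra with bracket [a⊗tᵐ, b⊗tⁿ] = ½(m−n)(ab)⊗t^{m+n−1} + C(m,3)⟨a,b⟩δ_{m+n,2}K and K central. Let U be an A-module (a complex vector space with a bilinear action satisfying a(bu) = (ab)u for all a,b ∈ A, u ∈ U). Then U ⊗ ℂ[t,t⁻¹] is a module for the Lie algebra L(A) under the action (a⊗tᵐ)·(u⊗tⁿ) = ¼(m−2n)(au)⊗t^{m+n−1} and K·w = 0 for all w; i.e., [x,y]·w = x·(y·w) − y·(x·w) for all x,y ∈ L(A), w ∈ U ⊗ ℂ[t,t⁻¹]. -/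

import Mathlib

/-- The bracket `[a⊗tᵐ, b⊗tⁿ] = ½(m−n)(ab)⊗t^{m+n−1} + C(m,3)⟨a,b⟩δ_{m+n,2}K`
on generators, valued in `L(A) = (A ⊗ ℂ[t,t⁻¹]) ⊕ ℂK`, where `A ⊗ ℂ[t,t⁻¹]` is
modeled as `ℤ →₀ A` and the `ℂK` component is the second coordinate. -/
noncomputable def brGen {A : Type*} [AddCommGroup A] [Module ℂ A]
    (mul : A →ₗ[ℂ] A →ₗ[ℂ] A) (form : A →ₗ[ℂ] A →ₗ[ℂ] ℂ)
    (m : ℤ) (a : A) (n : ℤ) (b : A) : (ℤ →₀ A) × ℂ :=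
  ((((m - n : ℤ) : ℂ) / 2) • Finsupp.single (m + n - 1) (mul a b),
   if m + n = 2 then ((m : ℂ) * ((m : ℂ) - 1) * ((m : ℂ) - 2) / 6) * form a b else 0)

/-- The bracket on all of `L(A)`, extending `brGen` with `K` central. -/
noncomputable def br {A : Type*} [AddCommGroup A] [Module ℂ A]
    (mul : A →ₗ[ℂ] A →ₗ[ℂ] A) (form : A →ₗ[ℂ] A →ₗ[ℂ] ℂ)
    (x y : (ℤ →₀ A) × ℂ) : (ℤ →₀ A) × ℂ :=
  x.1.sum fun m a => y.1.sum fun n b => brGen mul form m a n b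

/-- The action `(a⊗tᵐ)·(u⊗tⁿ) = ¼(m−2n)(au)⊗t^{m+n−1}` of `L(A)` on
`U ⊗ ℂ[t,t⁻¹]` (modeled as `ℤ →₀ U`), with `K` acting as `0`. -/
noncomputable def lact {A U : Type*} [AddCommGroup A] [Module ℂ A]
    [AddCommGroup U] [Module ℂ U] (act : A →ₗ[ℂ] U →ₗ[ℂ] U)
    (x : (ℤ →₀ A) × ℂ) (w : ℤ →₀ U) : ℤ →₀ U :=
  x.1.sum fun m a => w.sum fun n u =>
    (((m - 2*n : ℤ) : ℂ) / 4) • Finsupp.single (m + n - 1) (act a u)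

section Aux
variable {A U : Type*} [AddCommGroup A] [Module ℂ A] [AddCommGroup U] [Module ℂ U]
variable (mul : A →ₗ[ℂ] A →ₗ[ℂ] A) (form : A →ₗ[ℂ] A →ₗ[ℂ] ℂ) (act : A →ₗ[ℂ] U →ₗ[ℂ] U)

lemma lact_zero_right (x : (ℤ →₀ A) × ℂ) : lact act x 0 = 0 := by
  simp [lact]

lemma lact_zero_left (c : ℂ) (w : ℤ →₀ U) : lact act (0, c) w = 0 := by
  simp [lact]

lemma lact_add_right (x : (ℤ →₀ A) × ℂ) (w₁ w₂ : ℤ →₀ U) :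
    lact act x (w₁ + w₂) = lact act x w₁ + lact act x w₂ := by
  unfold lact
  rw [← Finsupp.sum_add]
  refine Finsupp.sum_congr fun m _ => ?_
  rw [Finsupp.sum_add_index'] <;> simp

lemma lact_add_left (f₁ f₂ : ℤ →₀ A) (c : ℂ) (w : ℤ →₀ U) :
    lact act (f₁ + f₂, c) w = lact act (f₁, c) w + lact act (f₂, c) w := by
  unfold lact
  rw [Finsupp.sum_add_index'] <;> simp [Finsupp.sum_add, smul_add, ← Finsupp.sum_add]

lemma br_zero_left (c : ℂ) (y : (ℤ →₀ A) × ℂ) : br mul form (0, c) y = 0 := by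
  simp [br]

lemma br_zero_right (c : ℂ) (x : (ℤ →₀ A) × ℂ) : br mul form x (0, c) = 0 := by
  simp [br]

lemma brGen_zero_left (m n : ℤ) (b : A) : brGen mul form m 0 n b = 0 := by
  simp [brGen, Prod.ext_iff]

lemma brGen_zero_right (m n : ℤ) (a : A) : brGen mul form m a n 0 = 0 := by
  simp [brGen, Prod.ext_iff]

lemma brGen_add_left (m n : ℤ) (a₁ a₂ b : A) :
    brGen mul form m (a₁ + a₂) n b = brGen mul form m a₁ n b + brGen mul form m a₂ n b := by
  simp [brGen, Prod.ext_iff, Finsupp.single_add, smul_add, mul_add, apply_ite₂ (· + ·)]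

lemma brGen_add_right (m n : ℤ) (a b₁ b₂ : A) :
    brGen mul form m a n (b₁ + b₂) = brGen mul form m a n b₁ + brGen mul form m a n b₂ := by
  simp [brGen, Prod.ext_iff, Finsupp.single_add, smul_add, mul_add, apply_ite₂ (· + ·)]

lemma br_add_left (f₁ f₂ : ℤ →₀ A) (c : ℂ) (y : (ℤ →₀ A) × ℂ) :
    br mul form (f₁ + f₂, c) y = br mul form (f₁, c) y + br mul form (f₂, c) y := by
  unfold br
  rw [Finsupp.sum_add_index']
  · intro m
    exact Finset.sum_eq_zero fun n _ => brGen_zero_left mul form m n _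
  · intro m a₁ a₂
    rw [← Finsupp.sum_add]
    exact Finsupp.sum_congr fun n _ => brGen_add_left mul form m n a₁ a₂ _

lemma br_add_right (g₁ g₂ : ℤ →₀ A) (c : ℂ) (x : (ℤ →₀ A) × ℂ) :
    br mul form x (g₁ + g₂, c) = br mul form x (g₁, c) + br mul form x (g₂, c) := by
  unfold br
  rw [← Finsupp.sum_add]
  refine Finsupp.sum_congr fun m _ => ?_
  rw [Finsupp.sum_add_index']
  · intro n; exact brGen_zero_right mul form m n _
  · intro n b₁ b₂; exact brGen_add_right mul form m n _ b₁ b₂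

lemma lact_single_single (c : ℂ) (m : ℤ) (a : A) (p : ℤ) (u : U) :
    lact act (Finsupp.single m a, c) (Finsupp.single p u)
      = (((m - 2*p : ℤ) : ℂ) / 4) • Finsupp.single (m + p - 1) (act a u) := by
  unfold lact
  rw [Finsupp.sum_single_index, Finsupp.sum_single_index]
  · simp
  · exact Finset.sum_eq_zero fun k _ => by simp

lemma br_single_single (c d : ℂ) (m n : ℤ) (a b : A) :
    br mul form (Finsupp.single m a, c) (Finsupp.single n b, d) = brGen mul form m a n b := by
  unfold br
  rw [Finsupp.sum_single_index, Finsupp.sum_single_index]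
  · exact brGen_zero_right mul form m n a
  · exact Finset.sum_eq_zero fun k _ => brGen_zero_left mul form m k _

lemma lact_smul_single (s c : ℂ) (m : ℤ) (a : A) (w : ℤ →₀ U) :
    lact act (s • Finsupp.single m a, c) w = s • lact act (Finsupp.single m a, c) w := by
  unfold lact
  rw [Finsupp.smul_single, Finsupp.sum_single_index, Finsupp.sum_single_index]
  · rw [Finsupp.smul_sum]
    refine Finsupp.sum_congr fun n u => ?_
    rw [map_smul, LinearMap.smul_apply, smul_comm]
    simp only [Finsupp.smul_single]
  all_goals simp

end Aux

section Main
variable {A U : Type*} [AddCommGroup A] [Module ℂ A] [AddCommGroup U] [Module ℂ U]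
variable (mul : A →ₗ[ℂ] A →ₗ[ℂ] A) (form : A →ₗ[ℂ] A →ₗ[ℂ] ℂ) (act : A →ₗ[ℂ] U →ₗ[ℂ] U)

lemma lact_addp (x y : (ℤ →₀ A) × ℂ) (w : ℤ →₀ U) :
    lact act (x + y) w = lact act x w + lact act y w := by
  obtain ⟨f, c⟩ := x; obtain ⟨g, d⟩ := y
  exact lact_add_left act f g (c + d) w

lemma lact_zerop (w : ℤ →₀ U) : lact act (0 : (ℤ →₀ A) × ℂ) w = 0 := by
  simp [lact]

lemma lact_single_smul (c s : ℂ) (m p : ℤ) (a : A) (u : U) :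
    lact act (Finsupp.single m a, c) (s • Finsupp.single p u)
      = s • lact act (Finsupp.single m a, c) (Finsupp.single p u) := by
  rw [Finsupp.smul_single, lact_single_single, lact_single_single, map_smul]
  simp only [Finsupp.smul_single, LinearMap.smul_apply]
  rw [smul_comm]

lemma key (hcomm : ∀ a b : A, mul a b = mul b a)
    (hact : ∀ (a b : A) (u : U), act a (act b u) = act (mul a b) u)
    (c d : ℂ) (m n : ℤ) (a b : A) (p : ℤ) (u : U) :
    lact act (brGen mul form m a n b) (Finsupp.single p u)
      = lact act (Finsupp.single m a, c)
          (lact act (Finsupp.single n b, d) (Finsupp.single p u))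
        - lact act (Finsupp.single n b, d)
            (lact act (Finsupp.single m a, c) (Finsupp.single p u)) := by
  unfold brGen
  rw [lact_smul_single, lact_single_single, lact_single_single, lact_single_single,
      lact_single_smul, lact_single_smul, lact_single_single, lact_single_single]
  rw [hact, hact, hcomm b a]
  have e1 : m + n - 1 + p - 1 = m + (n + p - 1) - 1 := by ring
  have e2 : n + (m + p - 1) - 1 = m + (n + p - 1) - 1 := by ring
  rw [e1, e2, smul_smul, smul_smul, smul_smul, ← sub_smul]
  congr 1
  push_cast
  ring

lemma step1 (hcomm : ∀ a b : A, mul a b = mul b a)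
    (hact : ∀ (a b : A) (u : U), act a (act b u) = act (mul a b) u)
    (c d : ℂ) (m n : ℤ) (a b : A) (w : ℤ →₀ U) :
    lact act (brGen mul form m a n b) w
      = lact act (Finsupp.single m a, c) (lact act (Finsupp.single n b, d) w)
        - lact act (Finsupp.single n b, d) (lact act (Finsupp.single m a, c) w) := by
  induction w using Finsupp.induction with
  | zero => simp [lact_zero_right]
  | single_add p u w' hp hu ih =>
    rw [lact_add_right, lact_add_right, lact_add_right, lact_add_right, lact_add_right,
        key mul form act hcomm hact c d, ih]
    abel

lemma step2 (hcomm : ∀ a b : A, mul a b = mul b a)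
    (hact : ∀ (a b : A) (u : U), act a (act b u) = act (mul a b) u)
    (c d : ℂ) (m : ℤ) (a : A) (g : ℤ →₀ A) (w : ℤ →₀ U) :
    lact act (br mul form (Finsupp.single m a, c) (g, d)) w
      = lact act (Finsupp.single m a, c) (lact act (g, d) w)
        - lact act (g, d) (lact act (Finsupp.single m a, c) w) := by
  induction g using Finsupp.induction with
  | zero =>
    rw [br_zero_right, lact_zerop, lact_zero_left, lact_zero_left, lact_zero_right]
    simp
  | single_add n b g' hn hb ih =>
    rw [br_add_right, lact_addp, br_single_single, step1 mul form act hcomm hact c d, ih,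
        lact_add_left, lact_add_left, lact_add_right]
    abel

end Main

/-- If `A` is a commutative associative ℂ-algebra with a symmetric associative bilinear
form and `U` is an `A`-module, then `U ⊗ ℂ[t,t⁻¹]` is a module for the Lie algebra
`L(A)`: `[x,y]·w = x·(y·w) − y·(x·w)`. -/
theorem UtC_is_LA_module {A U : Type*} [AddCommGroup A] [Module ℂ A]
    [AddCommGroup U] [Module ℂ U]
    (mul : A →ₗ[ℂ] A →ₗ[ℂ] A) (form : A →ₗ[ℂ] A →ₗ[ℂ] ℂ)
    (act : A →ₗ[ℂ] U →ₗ[ℂ] U)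
    (hcomm : ∀ a b : A, mul a b = mul b a)
    (hassoc : ∀ a b c : A, mul (mul a b) c = mul a (mul b c))
    (hsymm : ∀ a b : A, form a b = form b a)
    (hform : ∀ a b c : A, form (mul a b) c = form a (mul b c))
    (hact : ∀ (a b : A) (u : U), act a (act b u) = act (mul a b) u) :
    ∀ (x y : (ℤ →₀ A) × ℂ) (w : ℤ →₀ U),
      lact act (br mul form x y) w
        = lact act x (lact act y w) - lact act y (lact act x w) := by
  intro x y w
  obtain ⟨f, c⟩ := x; obtain ⟨g, d⟩ := y
  induction f using Finsupp.induction with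
  | zero =>
    rw [br_zero_left, lact_zerop, lact_zero_left, lact_zero_left, lact_zero_right]
    simp
  | single_add m a f' hm ha ih =>
    rw [br_add_left, lact_addp, step2 mul form act hcomm hact c d, ih,
        lact_add_left, lact_add_left, lact_add_right]
    abel
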